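/- Let 0 ≤ α < n. There exists a positive constant C, depending only on α and n, such that for every f ∈ L¹_loc(ℝⁿ), sup_{t>0} (M_α f)*(t) ≤ C · sup_{t>0} t^{α/n} f*(t); that is, M_α maps the weak Lorentz space WL_{n/α}(ℝⁿ) boundedly into L^∞. -/

import Mathlib

open MeasureTheory ENNReal Set Metric

/-- Non-increasing rearrangement of an `ℝ≥0∞`-valued function on `ℝⁿ`:
`g*(t) = inf {l | volume {x | g x > l} ≤ t}`. -/
noncomputable def rearr (n : ℕ) (g : EuclideanSpace ℝ (Fin n) → ℝ≥0∞) (t : ℝ) : ℝ≥0∞ :=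
  sInf {l : ℝ≥0∞ | volume {x | l < g x} ≤ ENNReal.ofReal t}

/-- The fractional maximal operator
`M_α f (x) = sup_{r>0} |B(x,r)|^(α/n - 1) ∫_{B(x,r)} |f|`. -/
noncomputable def fracMax (n : ℕ) (α : ℝ) (f : EuclideanSpace ℝ (Fin n) → ℝ)
    (x : EuclideanSpace ℝ (Fin n)) : ℝ≥0∞ :=
  ⨆ r : {r : ℝ // 0 < r},
    volume (ball x r.1) ^ (α / n - 1 : ℝ) * ∫⁻ y in ball x r.1, ENNReal.ofReal |f y|

/-- `f**(t) = (1/t) ∫₀^t f*(s) ds` for a real-valued `f` on `ℝⁿ`. -/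
noncomputable def dstar (n : ℕ) (f : EuclideanSpace ℝ (Fin n) → ℝ) (t : ℝ) : ℝ≥0∞ :=
  ENNReal.ofReal (1 / t) *
    ∫⁻ s in Set.Ioc (0 : ℝ) t, rearr n (fun y => ENNReal.ofReal |f y|) s

/-- Lorentz norm `‖g‖_{L_{p,q}} = (∫₀^∞ (t^{1/p} g*(t))^q dt/t)^{1/q}`, with the usual
supremum modification when `q = ∞`. -/
noncomputable def lorentzNorm (n : ℕ) (p : ℝ) (q : ℝ≥0∞)
    (g : EuclideanSpace ℝ (Fin n) → ℝ≥0∞) : ℝ≥0∞ :=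
  if q = ⊤ then
    ⨆ t : {t : ℝ // 0 < t}, ENNReal.ofReal (t.1 ^ (1 / p)) * rearr n g t.1
  else
    (∫⁻ t in Set.Ioi (0 : ℝ),
        (ENNReal.ofReal (t ^ (1 / p)) * rearr n g t) ^ q.toReal * ENNReal.ofReal (1 / t)) ^
      (1 / q.toReal)

/-- Lorentz–Morrey norm
`‖g‖_{𝓛_{p,q;λ}} = sup_{x, r>0} r^{-λ/p} ‖g χ_{B(x,r)}‖_{L_{p,q}}`. -/
noncomputable def lorentzMorrey (n : ℕ) (p : ℝ) (q : ℝ≥0∞) (lam : ℝ)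
    (g : EuclideanSpace ℝ (Fin n) → ℝ≥0∞) : ℝ≥0∞ :=
  ⨆ (x : EuclideanSpace ℝ (Fin n)) (r : {r : ℝ // 0 < r}),
    ENNReal.ofReal (r.1 ^ (-(lam / p))) * lorentzNorm n p q ((ball x r.1).indicator g)
lemma ennreal_eq_zero_of_le_ofReal {a : ℝ≥0∞}
    (h : ∀ t : ℝ, 0 < t → a ≤ ENNReal.ofReal t) : a = 0 := by
  by_contra ha
  rcases eq_or_ne a ⊤ with htop | htop
  · have := h 1 one_pos
    rw [htop] at this
    exact (lt_of_le_of_lt this ENNReal.ofReal_lt_top).ne rfl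
  · have hpos : 0 < a.toReal := ENNReal.toReal_pos ha htop
    have h2 := h (a.toReal / 2) (by linarith)
    have : a.toReal ≤ a.toReal / 2 := by
      have := ENNReal.toReal_mono (by exact ENNReal.ofReal_ne_top) h2
      rwa [ENNReal.toReal_ofReal (by linarith)] at this
    linarith

lemma rearr_le_of_forall {n : ℕ} {g : EuclideanSpace ℝ (Fin n) → ℝ≥0∞} (t : ℝ) {M : ℝ≥0∞}
    (h : ∀ x, g x ≤ M) : rearr n g t ≤ M := by
  apply sInf_le
  have : {x : EuclideanSpace ℝ (Fin n) | M < g x} = ∅ := by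
    ext x; simp only [Set.mem_setOf_eq, Set.mem_empty_iff_false, iff_false, not_lt]; exact h x
  simp [Set.mem_setOf_eq, this]

lemma rearr_lower {n : ℕ} {g : EuclideanSpace ℝ (Fin n) → ℝ≥0∞} {t : ℝ} {c : ℝ≥0∞}
    (h : ENNReal.ofReal t < volume {x | c < g x}) : c ≤ rearr n g t := by
  apply le_sInf
  intro l hl
  by_contra hlc
  push_neg at hlc
  have hsub : {x : EuclideanSpace ℝ (Fin n) | c < g x} ⊆ {x | l < g x} :=
    fun x hx => lt_trans hlc hx
  exact absurd (le_trans (measure_mono hsub) hl) (not_le.mpr h)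

lemma null_of_rearr_le {n : ℕ} {g : EuclideanSpace ℝ (Fin n) → ℝ≥0∞} {N' : ℝ≥0∞}
    (hfin : ∀ x, g x < ⊤) (h : ∀ t : ℝ, 0 < t → rearr n g t ≤ N') :
    volume {x | N' < g x} = 0 := by
  have key : ∀ c : ℝ≥0∞, N' < c → volume {x : EuclideanSpace ℝ (Fin n) | c < g x} = 0 := by
    intro c hc
    apply ennreal_eq_zero_of_le_ofReal
    intro t ht
    have h1 : rearr n g t < c := lt_of_le_of_lt (h t ht) hc
    obtain ⟨l, hl, hlc⟩ := sInf_lt_iff.mp h1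
    refine le_trans (measure_mono ?_) hl
    exact fun x hx => lt_trans hlc hx
  rcases eq_or_ne N' ⊤ with htop | htop
  · have : {x : EuclideanSpace ℝ (Fin n) | N' < g x} = ∅ := by
      ext x; simp only [Set.mem_setOf_eq, Set.mem_empty_iff_false, iff_false, not_lt, htop]
      exact le_top
    simp [this]
  · have hsub : {x : EuclideanSpace ℝ (Fin n) | N' < g x} ⊆
        ⋃ k : ℕ, {x | N' + ENNReal.ofReal (1 / (k + 1)) < g x} := by
      intro x hx
      obtain ⟨rr, hrr, hlt⟩ := ENNReal.lt_iff_exists_add_pos_lt.mp hx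
      obtain ⟨k, hk⟩ := exists_nat_one_div_lt (by exact_mod_cast hrr : (0:ℝ) < (rr:ℝ))
      refine Set.mem_iUnion.mpr ⟨k, ?_⟩
      have : ENNReal.ofReal (1 / (k + 1)) ≤ (rr : ℝ≥0∞) := by
        rw [← ENNReal.ofReal_coe_nnreal]
        exact ENNReal.ofReal_le_ofReal (by push_cast; exact hk.le)
      exact lt_of_le_of_lt (add_le_add (le_refl N') this) hlt
    refine measure_mono_null hsub (measure_iUnion_null fun k => key _ ?_)
    refine ENNReal.lt_add_right htop ?_
    simp only [ne_eq, ENNReal.ofReal_eq_zero, not_le]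
    positivity

lemma lint_le_of_null {n : ℕ} {g : EuclideanSpace ℝ (Fin n) → ℝ≥0∞} (hg : Measurable g)
    {B : Set (EuclideanSpace ℝ (Fin n))} (hB : MeasurableSet B) {N' : ℝ≥0∞}
    (hnull : volume {y | N' < g y} = 0) :
    ∫⁻ y in B, g y ≤ N' * volume B := by
  have hsplit : B ⊆ (B ∩ {y | g y ≤ N'}) ∪ (B ∩ {y | N' < g y}) := by
    intro y hy
    rcases le_or_gt (g y) N' with h | h
    · exact Or.inl ⟨hy, h⟩
    · exact Or.inr ⟨hy, h⟩
  calc ∫⁻ y in B, g y ≤ ∫⁻ y in (B ∩ {y | g y ≤ N'}) ∪ (B ∩ {y | N' < g y}), g y :=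
        lintegral_mono_set hsplit
    _ ≤ (∫⁻ y in B ∩ {y | g y ≤ N'}, g y) + ∫⁻ y in B ∩ {y | N' < g y}, g y :=
        lintegral_union_le _ _ _
    _ ≤ N' * volume B + 0 := by
        gcongr
        · calc ∫⁻ y in B ∩ {y | g y ≤ N'}, g y
              ≤ ∫⁻ _ in B ∩ {y | g y ≤ N'}, N' :=
                setLIntegral_mono' (hB.inter (hg measurableSet_Iic)) fun y hy => hy.2
            _ = N' * volume (B ∩ {y | g y ≤ N'}) := setLIntegral_const _ _
            _ ≤ N' * volume B := mul_le_mul_right (measure_mono Set.inter_subset_left) _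
        · have : volume (B ∩ {y | N' < g y}) = 0 :=
            measure_mono_null Set.inter_subset_right hnull
          rw [Measure.restrict_eq_zero.mpr this, lintegral_zero_measure]
    _ = N' * volume B := add_zero _

lemma dist_bound {n : ℕ} {α : ℝ} (hα : 0 < α) (hn : (0:ℝ) < n)
    {g : EuclideanSpace ℝ (Fin n) → ℝ≥0∞} {N : ℝ≥0∞}
    (hN : ∀ t : ℝ, 0 < t → ENNReal.ofReal (t ^ (α / n)) * rearr n g t ≤ N)
    {c : ℝ≥0∞} (hc0 : c ≠ 0) (hctop : c ≠ ⊤) :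
    volume {x | c < g x} ≤ (N / c) ^ ((n:ℝ) / α) := by
  by_contra h
  push_neg at h
  obtain ⟨m, hKm, hmD⟩ := exists_between h
  have hmtop : m ≠ ⊤ := (lt_of_lt_of_le hmD le_top).ne
  have hm0 : m ≠ 0 := by
    intro h0; rw [h0] at hKm; exact (not_lt_of_ge zero_le) hKm
  set t : ℝ := m.toReal with ht_def
  have ht : 0 < t := ENNReal.toReal_pos hm0 hmtop
  have hofReal : ENNReal.ofReal t = m := ENNReal.ofReal_toReal hmtop
  have hc_le : c ≤ rearr n g t := rearr_lower (by rw [hofReal]; exact hmD)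
  have h1 : ENNReal.ofReal (t ^ (α / n)) * c ≤ N :=
    le_trans (mul_le_mul_right hc_le _) (hN t ht)
  have h2 : ENNReal.ofReal (t ^ (α / n)) ≤ N / c :=
    (ENNReal.le_div_iff_mul_le (Or.inl hc0) (Or.inl hctop)).mpr h1
  have hexp : α / n * ((n:ℝ) / α) = 1 := by field_simp
  have h3 : m ≤ (N / c) ^ ((n:ℝ) / α) := by
    have := ENNReal.rpow_le_rpow h2 (by positivity : 0 ≤ (n:ℝ)/α)
    rwa [ENNReal.ofReal_rpow_of_nonneg (by positivity) (by positivity),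
      ← Real.rpow_mul ht.le, hexp, Real.rpow_one, hofReal] at this
  exact not_lt_of_ge h3 hKm

/-- for `0 ≤ α < n` there is `C > 0` (depending only on `α, n`) with
`sup_{t>0} (M_α f)*(t) ≤ C · sup_{t>0} t^{α/n} f*(t)` for every `f ∈ L¹_loc(ℝⁿ)`. -/
theorem stmt_2 (n : ℕ) (α : ℝ) (hα0 : 0 ≤ α) (hαn : α < n) :
    ∃ C : ℝ, 0 < C ∧ ∀ f : EuclideanSpace ℝ (Fin n) → ℝ, LocallyIntegrable f volume →
      (⨆ t : {t : ℝ // 0 < t}, rearr n (fracMax n α f) t.1) ≤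
        ENNReal.ofReal C *
          ⨆ t : {t : ℝ // 0 < t},
            ENNReal.ofReal (t.1 ^ (α / n)) * rearr n (fun y => ENNReal.ofReal |f y|) t.1 := by
  have hn : (0:ℝ) < n := lt_of_le_of_lt hα0 hαn
  set r0 : ℝ≥0∞ := (2:ℝ≥0∞) ^ (1 - (n:ℝ)/α) with hr0_def
  set E : ℝ≥0∞ := 1 + 2 * (1 - r0)⁻¹ with hE_def
  refine ⟨1 + E.toReal, by have := ENNReal.toReal_nonneg (a := E); linarith, ?_⟩
  have hCge : (1:ℝ≥0∞) ≤ ENNReal.ofReal (1 + E.toReal) := by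
    rw [← ENNReal.ofReal_one]
    exact ENNReal.ofReal_le_ofReal (by have := ENNReal.toReal_nonneg (a := E); linarith)
  intro f hf
  obtain ⟨f', hf'meas, hff'⟩ : ∃ f', Measurable f' ∧ f =ᵐ[volume] f' := by
    have h := hf.aestronglyMeasurable.aemeasurable
    exact ⟨h.mk f, h.measurable_mk, h.ae_eq_mk⟩
  have hgg' : (fun y => ENNReal.ofReal |f y|) =ᵐ[volume] (fun y => ENNReal.ofReal |f' y|) :=
    hff'.mono fun y hy => by simp [hy]
  have hre : ∀ t : ℝ, rearr n (fun y => ENNReal.ofReal |f y|) t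
      = rearr n (fun y => ENNReal.ofReal |f' y|) t := by
    intro t
    unfold rearr
    congr 1
    ext l
    simp only [Set.mem_setOf_eq]
    rw [measure_congr (show ({x | l < ENNReal.ofReal |f x|} : Set (EuclideanSpace ℝ (Fin n)))
        =ᶠ[ae volume] {x | l < ENNReal.ofReal |f' x|} from hgg'.mono fun y hy => by
      show (l < ENNReal.ofReal |f y|) = (l < ENNReal.ofReal |f' y|)
      rw [show ENNReal.ofReal |f y| = ENNReal.ofReal |f' y| from hy])]
  have hfm : fracMax n α f = fracMax n α f' := by
    funext x
    unfold fracMax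
    refine iSup_congr fun r => ?_
    congr 1
    exact lintegral_congr_ae (ae_restrict_of_ae hgg')
  rw [hfm]
  simp only [hre]
  set N : ℝ≥0∞ := ⨆ t : {t : ℝ // 0 < t},
      ENNReal.ofReal (t.1 ^ (α / n)) * rearr n (fun y => ENNReal.ofReal |f' y|) t.1 with hN_def
  have hgmeas : Measurable (fun y : EuclideanSpace ℝ (Fin n) => ENNReal.ofReal |f' y|) :=
    hf'meas.abs.ennreal_ofReal
  rcases eq_or_ne N ⊤ with hNtop | hNtop
  · rw [hNtop, ENNReal.mul_top]
    · exact le_top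
    · simp only [ne_eq, ENNReal.ofReal_eq_zero, not_le]
      have := ENNReal.toReal_nonneg (a := E); linarith
  have hNb : ∀ t : ℝ, 0 < t →
      ENNReal.ofReal (t ^ (α / n)) * rearr n (fun y => ENNReal.ofReal |f' y|) t ≤ N := by
    intro t ht
    rw [hN_def]
    exact le_iSup (fun s : {t : ℝ // 0 < t} =>
      ENNReal.ofReal (s.1 ^ (α / n)) * rearr n (fun y => ENNReal.ofReal |f' y|) s.1) ⟨t, ht⟩
  refine iSup_le fun t => rearr_le_of_forall t.1 fun x => ?_
  show (⨆ r : {r : ℝ // 0 < r},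
      volume (ball x r.1) ^ (α / n - 1 : ℝ) * ∫⁻ y in ball x r.1, ENNReal.ofReal |f' y|) ≤ _
  refine iSup_le fun r => ?_
  set V : ℝ≥0∞ := volume (ball x r.1) with hV_def
  have hV0 : V ≠ 0 := (measure_ball_pos volume x r.2).ne'
  have hVtop : V ≠ ⊤ := measure_ball_lt_top.ne
  rcases hα0.eq_or_lt with hα | hα
  · -- α = 0
    have hα' : α = 0 := hα.symm
    subst hα'
    have hglN : ∀ s : ℝ, 0 < s → rearr n (fun y => ENNReal.ofReal |f' y|) s ≤ N := by
      intro s hs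
      have h1 := hNb s hs
      rwa [zero_div, Real.rpow_zero, ENNReal.ofReal_one, one_mul] at h1
    have hnull := null_of_rearr_le (fun y => ENNReal.ofReal_lt_top) hglN
    have hbound := lint_le_of_null (B := ball x r.1) hgmeas measurableSet_ball hnull
    calc V ^ ((0:ℝ) / n - 1) * ∫⁻ y in ball x r.1, ENNReal.ofReal |f' y|
        ≤ V ^ ((0:ℝ)/n - 1) * (N * V) := mul_le_mul_right hbound _
      _ = N := by
          rw [zero_div, zero_sub, ENNReal.rpow_neg_one, mul_comm N V, ← mul_assoc,
            ENNReal.inv_mul_cancel hV0 hVtop, one_mul]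
      _ = 1 * N := (one_mul N).symm
      _ ≤ ENNReal.ofReal (1 + E.toReal) * N := mul_le_mul_left hCge N
  · -- 0 < α
    have hr0lt1 : r0 < 1 := ENNReal.rpow_lt_one_of_one_lt_of_neg one_lt_two (by
      rw [sub_neg]
      exact (one_lt_div hα).mpr hαn)
    have hsub0 : (1:ℝ≥0∞) - r0 ≠ 0 := (tsub_pos_iff_lt.mpr hr0lt1).ne'
    have hEtop : E ≠ ⊤ := by
      rw [hE_def]
      exact ENNReal.add_ne_top.mpr ⟨ENNReal.one_ne_top,
        ENNReal.mul_ne_top ENNReal.ofNat_ne_top (ENNReal.inv_ne_top.mpr hsub0)⟩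
    have hCE : E ≤ ENNReal.ofReal (1 + E.toReal) := by
      conv_lhs => rw [← ENNReal.ofReal_toReal hEtop]
      exact ENNReal.ofReal_le_ofReal (by have := ENNReal.toReal_nonneg (a := E); linarith)
    rcases eq_or_ne N 0 with hN0 | hN0
    · -- N = 0
      have hglN : ∀ s : ℝ, 0 < s → rearr n (fun y => ENNReal.ofReal |f' y|) s ≤ 0 := by
        intro s hs
        have h1 := hNb s hs
        rw [hN0] at h1
        have h2 : ENNReal.ofReal (s ^ (α/n)) ≠ 0 := by
          simp only [ne_eq, ENNReal.ofReal_eq_zero, not_le]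
          positivity
        rcases mul_eq_zero.mp (le_zero_iff.mp h1) with h | h
        · exact absurd h h2
        · exact le_of_eq h
      have hnull := null_of_rearr_le (fun y => ENNReal.ofReal_lt_top) hglN
      have hbound := lint_le_of_null (B := ball x r.1) hgmeas measurableSet_ball hnull
      rw [zero_mul] at hbound
      rw [le_zero_iff.mp hbound, mul_zero]
      exact zero_le
    -- main case 0 < N < ⊤
    set W : ℝ≥0∞ := V ^ (α / (n:ℝ)) with hW_def
    have hW0 : W ≠ 0 := (ENNReal.rpow_pos hV0.bot_lt hVtop).ne'
    have hWtop : W ≠ ⊤ := (ENNReal.rpow_lt_top_of_nonneg (by positivity) hVtop).ne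
    set lam : ℝ≥0∞ := N * W⁻¹ with hlam_def
    have hlam0 : lam ≠ 0 := mul_ne_zero hN0 (ENNReal.inv_ne_zero.mpr hWtop)
    have hlamtop : lam ≠ ⊤ := ENNReal.mul_ne_top hNtop (ENNReal.inv_ne_top.mpr hW0)
    have hdk : ∀ k : ℕ, volume {y : EuclideanSpace ℝ (Fin n) | 2^k * lam < ENNReal.ofReal |f' y|}
        ≤ V * ((2:ℝ≥0∞) ^ ((k:ℝ) * ((n:ℝ)/α)))⁻¹ := by
      intro k
      have h2k0 : ((2:ℝ≥0∞)^k) ≠ 0 := pow_ne_zero _ (by norm_num)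
      have h2ktop : ((2:ℝ≥0∞)^k) ≠ ⊤ := ENNReal.pow_ne_top ENNReal.ofNat_ne_top
      have hc0 : (2:ℝ≥0∞)^k * lam ≠ 0 := mul_ne_zero h2k0 hlam0
      have hctop : (2:ℝ≥0∞)^k * lam ≠ ⊤ := ENNReal.mul_ne_top h2ktop hlamtop
      refine le_trans (dist_bound hα hn hNb hc0 hctop) (le_of_eq ?_)
      have hNdiv : N / ((2:ℝ≥0∞)^k * lam) = W * ((2:ℝ≥0∞)^k)⁻¹ := by
        rw [hlam_def, div_eq_mul_inv, ENNReal.mul_inv (Or.inl h2k0) (Or.inl h2ktop),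
          ENNReal.mul_inv (Or.inl hN0) (Or.inl hNtop), inv_inv]
        rw [show N * (((2:ℝ≥0∞)^k)⁻¹ * (N⁻¹ * W)) = N * N⁻¹ * (W * ((2:ℝ≥0∞)^k)⁻¹) by ring,
          ENNReal.mul_inv_cancel hN0 hNtop, one_mul]
      rw [hNdiv, ENNReal.mul_rpow_of_nonneg _ _ (by positivity : (0:ℝ) ≤ (n:ℝ)/α)]
      congr 1
      · rw [hW_def, ← ENNReal.rpow_mul, show α / (n:ℝ) * ((n:ℝ)/α) = 1 by field_simp,
          ENNReal.rpow_one]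
      · rw [ENNReal.inv_rpow, ← ENNReal.rpow_natCast (2:ℝ≥0∞) k, ← ENNReal.rpow_mul]
    have hcov : ball x r.1 ∩ {y | lam < ENNReal.ofReal |f' y|} ⊆
        ⋃ k : ℕ, {y : EuclideanSpace ℝ (Fin n) |
          2^k * lam < ENNReal.ofReal |f' y| ∧ ENNReal.ofReal |f' y| ≤ 2^(k+1) * lam} := by
      rintro y ⟨-, hy⟩
      have hgytop : ENNReal.ofReal |f' y| ≠ ⊤ := ENNReal.ofReal_ne_top
      have hex : ∃ m : ℕ, ENNReal.ofReal |f' y| ≤ 2^(m+1) * lam := by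
        obtain ⟨m, hm⟩ := ENNReal.exists_nat_gt
          (ENNReal.mul_ne_top hgytop (ENNReal.inv_ne_top.mpr hlam0))
        refine ⟨m, ?_⟩
        have h1 : ENNReal.ofReal |f' y| * lam⁻¹ ≤ 2^(m+1) := by
          refine le_trans hm.le ?_
          calc ((m:ℝ≥0∞)) ≤ ((2^m : ℕ) : ℝ≥0∞) := by exact_mod_cast (Nat.lt_two_pow_self (n := m)).le
            _ = 2^m := by push_cast; ring
            _ ≤ 2^(m+1) := pow_le_pow_right' one_le_two (by omega)
        calc ENNReal.ofReal |f' y| = ENNReal.ofReal |f' y| * lam⁻¹ * lam := by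
              rw [mul_assoc, ENNReal.inv_mul_cancel hlam0 hlamtop, mul_one]
          _ ≤ 2^(m+1) * lam := mul_le_mul_left h1 _
      classical
      have hk1 : ENNReal.ofReal |f' y| ≤ 2^(Nat.find hex + 1) * lam := Nat.find_spec hex
      have hk2 : 2^(Nat.find hex) * lam < ENNReal.ofReal |f' y| := by
        rcases Nat.eq_zero_or_pos (Nat.find hex) with h0 | h0
        · rw [h0, pow_zero, one_mul]; exact hy
        · obtain ⟨j, hj⟩ : ∃ j, Nat.find hex = j + 1 := ⟨Nat.find hex - 1, by omega⟩
          have hmin := Nat.find_min hex (m := j) (by omega)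
          push_neg at hmin
          rw [hj]
          exact hmin
      exact Set.mem_iUnion.mpr ⟨Nat.find hex, hk2, hk1⟩
    have hIk : ∀ k : ℕ, (∫⁻ y in {y : EuclideanSpace ℝ (Fin n) |
          2^k * lam < ENNReal.ofReal |f' y| ∧ ENNReal.ofReal |f' y| ≤ 2^(k+1) * lam},
          ENNReal.ofReal |f' y|) ≤ (2 * lam * V) * r0 ^ k := by
      intro k
      have hAk : MeasurableSet {y : EuclideanSpace ℝ (Fin n) |
          2^k * lam < ENNReal.ofReal |f' y| ∧ ENNReal.ofReal |f' y| ≤ 2^(k+1) * lam} :=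
        hgmeas measurableSet_Ioc
      calc (∫⁻ y in {y : EuclideanSpace ℝ (Fin n) |
            2^k * lam < ENNReal.ofReal |f' y| ∧ ENNReal.ofReal |f' y| ≤ 2^(k+1) * lam},
            ENNReal.ofReal |f' y|)
          ≤ ∫⁻ _ in {y : EuclideanSpace ℝ (Fin n) |
            2^k * lam < ENNReal.ofReal |f' y| ∧ ENNReal.ofReal |f' y| ≤ 2^(k+1) * lam},
            2^(k+1) * lam := setLIntegral_mono' hAk fun y hy => hy.2
        _ = 2^(k+1) * lam * volume {y : EuclideanSpace ℝ (Fin n) |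
            2^k * lam < ENNReal.ofReal |f' y| ∧ ENNReal.ofReal |f' y| ≤ 2^(k+1) * lam} :=
            setLIntegral_const _ _
        _ ≤ 2^(k+1) * lam * (V * ((2:ℝ≥0∞) ^ ((k:ℝ) * ((n:ℝ)/α)))⁻¹) := by
            gcongr
            exact le_trans (measure_mono fun y hy => hy.1) (hdk k)
        _ = (2 * lam * V) * r0 ^ k := by
            have e1 : (2:ℝ≥0∞)^(k+1) = (2:ℝ≥0∞)^(((k:ℝ))+1) := by
              rw [← ENNReal.rpow_natCast (2:ℝ≥0∞) (k+1)]
              norm_num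
            have e2 : ((2:ℝ≥0∞) ^ ((k:ℝ)*((n:ℝ)/α)))⁻¹
                = (2:ℝ≥0∞)^(-((k:ℝ)*((n:ℝ)/α))) := (ENNReal.rpow_neg _ _).symm
            have e3 : r0 ^ k = (2:ℝ≥0∞)^((1-(n:ℝ)/α)*(k:ℝ)) := by
              rw [hr0_def, ← ENNReal.rpow_natCast ((2:ℝ≥0∞) ^ (1 - (n:ℝ)/α)) k,
                ← ENNReal.rpow_mul]
            rw [e1, e2, e3]
            calc (2:ℝ≥0∞)^(((k:ℝ))+1) * lam * (V * (2:ℝ≥0∞)^(-((k:ℝ)*((n:ℝ)/α))))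
                = ((2:ℝ≥0∞)^(((k:ℝ))+1) * (2:ℝ≥0∞)^(-((k:ℝ)*((n:ℝ)/α)))) * (lam * V) := by
                  ring
              _ = (2:ℝ≥0∞)^((((k:ℝ))+1) + (-((k:ℝ)*((n:ℝ)/α)))) * (lam*V) := by
                  rw [← ENNReal.rpow_add _ _ two_ne_zero ENNReal.ofNat_ne_top]
              _ = (2:ℝ≥0∞)^((1:ℝ) + (1-(n:ℝ)/α)*(k:ℝ)) * (lam*V) := by
                  rw [show ((((k:ℝ))+1) + (-((k:ℝ)*((n:ℝ)/α)))) = (1:ℝ) + (1-(n:ℝ)/α)*(k:ℝ)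
                    by ring]
              _ = ((2:ℝ≥0∞)^(1:ℝ) * (2:ℝ≥0∞)^((1-(n:ℝ)/α)*(k:ℝ))) * (lam*V) := by
                  rw [← ENNReal.rpow_add _ _ two_ne_zero ENNReal.ofNat_ne_top]
              _ = 2 * lam * V * (2:ℝ≥0∞)^((1-(n:ℝ)/α)*(k:ℝ)) := by
                  rw [ENNReal.rpow_one]; ring
    have hInt : (∫⁻ y in ball x r.1, ENNReal.ofReal |f' y|) ≤ lam * V * E := by
      have hsplit : ball x r.1 ⊆ (ball x r.1 ∩ {y | ENNReal.ofReal |f' y| ≤ lam})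
          ∪ (ball x r.1 ∩ {y | lam < ENNReal.ofReal |f' y|}) := by
        intro y hy
        rcases le_or_gt (ENNReal.ofReal |f' y|) lam with h | h
        exacts [Or.inl ⟨hy, h⟩, Or.inr ⟨hy, h⟩]
      calc (∫⁻ y in ball x r.1, ENNReal.ofReal |f' y|)
          ≤ ∫⁻ y in (ball x r.1 ∩ {y | ENNReal.ofReal |f' y| ≤ lam})
              ∪ (ball x r.1 ∩ {y | lam < ENNReal.ofReal |f' y|}), ENNReal.ofReal |f' y| :=
            lintegral_mono_set hsplit
        _ ≤ (∫⁻ y in ball x r.1 ∩ {y | ENNReal.ofReal |f' y| ≤ lam}, ENNReal.ofReal |f' y|)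
            + ∫⁻ y in ball x r.1 ∩ {y | lam < ENNReal.ofReal |f' y|}, ENNReal.ofReal |f' y| :=
            lintegral_union_le _ _ _
        _ ≤ lam * V + (2*lam*V) * (1 - r0)⁻¹ := by
            gcongr ?_ + ?_
            · calc (∫⁻ y in ball x r.1 ∩ {y | ENNReal.ofReal |f' y| ≤ lam},
                    ENNReal.ofReal |f' y|)
                  ≤ ∫⁻ _ in ball x r.1 ∩ {y | ENNReal.ofReal |f' y| ≤ lam}, lam :=
                    setLIntegral_mono' (measurableSet_ball.inter (hgmeas measurableSet_Iic))
                      fun y hy => hy.2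
                _ = lam * volume (ball x r.1 ∩ {y | ENNReal.ofReal |f' y| ≤ lam}) :=
                    setLIntegral_const _ _
                _ ≤ lam * V := mul_le_mul_right (measure_mono Set.inter_subset_left) _
            · calc (∫⁻ y in ball x r.1 ∩ {y | lam < ENNReal.ofReal |f' y|},
                    ENNReal.ofReal |f' y|)
                  ≤ ∫⁻ y in ⋃ k : ℕ, {y : EuclideanSpace ℝ (Fin n) |
                      2^k * lam < ENNReal.ofReal |f' y| ∧ ENNReal.ofReal |f' y| ≤ 2^(k+1) * lam},
                      ENNReal.ofReal |f' y| := lintegral_mono_set hcov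
                _ ≤ ∑' k : ℕ, ∫⁻ y in {y : EuclideanSpace ℝ (Fin n) |
                      2^k * lam < ENNReal.ofReal |f' y| ∧ ENNReal.ofReal |f' y| ≤ 2^(k+1) * lam},
                      ENNReal.ofReal |f' y| := lintegral_iUnion_le _ _
                _ ≤ ∑' k : ℕ, (2 * lam * V) * r0 ^ k := ENNReal.tsum_le_tsum hIk
                _ = (2 * lam * V) * ∑' k : ℕ, r0 ^ k := ENNReal.tsum_mul_left
                _ = (2*lam*V) * (1 - r0)⁻¹ := by rw [ENNReal.tsum_geometric]
        _ = lam * V * E := by rw [hE_def]; ring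
    have hkey : V ^ (α/(n:ℝ) - 1) * (lam * V) = N := by
      have h1 : V ^ (α/(n:ℝ) - 1) * V = W := by
        rw [hW_def]
        calc V ^ (α/(n:ℝ) - 1) * V = V ^ (α/(n:ℝ) - 1) * V^(1:ℝ) := by rw [ENNReal.rpow_one]
          _ = V ^ (α/(n:ℝ) - 1 + 1) := (ENNReal.rpow_add _ _ hV0 hVtop).symm
          _ = V ^ (α/(n:ℝ)) := by rw [show α/(n:ℝ) - 1 + 1 = α/(n:ℝ) by ring]
      calc V ^ (α/(n:ℝ) - 1) * (lam * V) = (V ^ (α/(n:ℝ) - 1) * V) * lam := by ring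
        _ = W * lam := by rw [h1]
        _ = N := by
            rw [hlam_def, show W * (N * W⁻¹) = W * W⁻¹ * N by ring,
              ENNReal.mul_inv_cancel hW0 hWtop, one_mul]
    calc V ^ (α/(n:ℝ) - 1) * ∫⁻ y in ball x r.1, ENNReal.ofReal |f' y|
        ≤ V ^ (α/(n:ℝ) - 1) * (lam * V * E) := mul_le_mul_right hInt _
      _ = (V ^ (α/(n:ℝ) - 1) * (lam * V)) * E := by ring
      _ = N * E := by rw [hkey]
      _ ≤ N * ENNReal.ofReal (1 + E.toReal) := mul_le_mul_right hCE _
      _ = ENNReal.ofReal (1 + E.toReal) * N := mul_comm _ _
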